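/- For all natural numbers i, j with j > i > 0, f(1 / (3^j + 3^i)) = (2/3)^i · (2^(j-i) / (3^(j-i) + 2^(j-i))). -/

import Mathlib

open intervalIntegral Set

theorem bourbaki_stmt (f : ℝ → ℝ)
    (hcont : ContinuousOn f (Set.Icc 0 1))
    (h0 : f 0 = 0) (h1 : f 1 = 1)
    (hw1 : ∀ x ∈ Set.Icc (0:ℝ) 1, f (x / 3) = (2/3) * f x)
    (hw2 : ∀ x ∈ Set.Icc (0:ℝ) 1, f ((2 - x) / 3) = (1/3) * (1 + f x))
    (hw3 : ∀ x ∈ Set.Icc (0:ℝ) 1, f ((2 + x) / 3) = 1/3 + (2/3) * f x) :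
    ∀ i j : ℕ, 0 < i → i < j → f (1 / (3 ^ j + 3 ^ i)) = (2/3) ^ i * (2 ^ (j - i) / (3 ^ (j - i) + 2 ^ (j - i))) := by
  -- scaling lemma: f (y / 3^n) = (2/3)^n * f y
  have scale : ∀ n : ℕ, ∀ y ∈ Set.Icc (0:ℝ) 1, f (y / 3 ^ n) = (2/3) ^ n * f y := by
    intro n
    induction n with
    | zero => intro y hy; simp
    | succ n ih =>
      intro y hy
      obtain ⟨hy0, hy1⟩ := hy
      have hy3 : y / 3 ∈ Set.Icc (0:ℝ) 1 := ⟨by linarith, by linarith⟩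
      have e : y / 3 ^ (n + 1) = (y / 3) / 3 ^ n := by
        rw [pow_succ]; ring
      rw [e, ih _ hy3, hw1 y ⟨hy0, hy1⟩, pow_succ]
      ring
  -- chain lemma using hw3
  have chain : ∀ m : ℕ, ∀ x : ℝ, 0 ≤ x → 3 ^ m * x ≤ 1 →
      f (1 - x) = (1 - (2/3) ^ m) + (2/3) ^ m * f (1 - 3 ^ m * x) := by
    intro m
    induction m with
    | zero => intro x hx0 hx1; simp
    | succ m ih =>
      intro x hx0 hle
      have h31 : (3:ℝ) ≤ 3 ^ (m + 1) := by
        calc (3:ℝ) = 3 ^ 1 := (pow_one 3).symm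
        _ ≤ 3 ^ (m + 1) := pow_le_pow_right₀ (by norm_num) (by omega)
      have hx3 : 3 * x ≤ 1 := by nlinarith
      have key : f (1 - x) = 1/3 + (2/3) * f (1 - 3 * x) := by
        have h := hw3 (1 - 3 * x) ⟨by linarith, by linarith⟩
        have harg : (2 + (1 - 3 * x)) / 3 = 1 - x := by ring
        rw [harg] at h
        exact h
      have ih' := ih (3 * x) (by linarith) (by
        calc (3:ℝ) ^ m * (3 * x) = 3 ^ (m + 1) * x := by ring
        _ ≤ 1 := hle)
      have e : (1:ℝ) - 3 ^ m * (3 * x) = 1 - 3 ^ (m + 1) * x := by ring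
      rw [key, ih', e]
      ring
  -- main value lemma
  have main : ∀ k : ℕ, 1 ≤ k → f (1 / (3 ^ k + 1)) = 2 ^ k / (3 ^ k + 2 ^ k) := by
    intro k hk
    have h3 : (0:ℝ) < 3 ^ k := by positivity
    have h3' : (0:ℝ) < 3 ^ k + 1 := by linarith
    set x : ℝ := 1 / (3 ^ k + 1) with hx
    have hx0 : 0 ≤ x := by positivity
    have hx1 : x ≤ 1 := by rw [hx, div_le_one h3']; linarith
    have hb : 3 ^ k * x ≤ 1 := by
      rw [hx, mul_one_div, div_le_one h3']; linarith
    have hxb : (1:ℝ) - 3 ^ k * x = x := by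
      rw [hx]; field_simp; ring
    have hbx : x = (1 - x) / 3 ^ k := by
      rw [hx]; field_simp; ring
    have hmem : (1:ℝ) - x ∈ Set.Icc (0:ℝ) 1 := ⟨by linarith, by linarith⟩
    have e1 : f x = (2/3) ^ k * f (1 - x) := by
      conv_lhs => rw [hbx]
      exact scale k _ hmem
    have e2 : f (1 - x) = (1 - (2/3) ^ k) + (2/3) ^ k * f (1 - 3 ^ k * x) :=
      chain k x hx0 hb
    rw [hxb] at e2
    rw [e2] at e1
    have hc0 : (0:ℝ) < (2/3) ^ k := by positivity
    have hc1 : ((2:ℝ)/3) ^ k < 1 := pow_lt_one₀ (by norm_num) (by norm_num) (by omega)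
    have h2 : (f x * (1 + (2/3) ^ k) - (2/3) ^ k) * (1 - (2/3) ^ k) = 0 := by
      linear_combination e1
    have h4 : f x * (1 + (2/3) ^ k) = (2/3) ^ k := by
      rcases mul_eq_zero.mp h2 with h | h
      · linarith
      · linarith
    have hc3 : ((2:ℝ)/3) ^ k * 3 ^ k = 2 ^ k := by
      rw [div_pow]; field_simp
    have h2k : (0:ℝ) < 2 ^ k := by positivity
    rw [eq_div_iff (by positivity : (3:ℝ) ^ k + 2 ^ k ≠ 0)]
    linear_combination 3 ^ k * h4 + (1 - f x) * hc3
  -- finish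
  intro i j hi hij
  have hk1 : 1 ≤ j - i := by omega
  have hj : j = i + (j - i) := by omega
  set k := j - i with hkdef
  have h3 : (0:ℝ) < 3 ^ k := by positivity
  have h3' : (0:ℝ) < 3 ^ k + 1 := by linarith
  have h3i : (0:ℝ) < 3 ^ i := by positivity
  have harg : (1:ℝ) / (3 ^ j + 3 ^ i) = (1 / (3 ^ k + 1)) / 3 ^ i := by
    rw [hj, pow_add]
    field_simp
  have hmem : (1:ℝ) / (3 ^ k + 1) ∈ Set.Icc (0:ℝ) 1 := by
    constructor
    · positivity
    · rw [div_le_one h3']; linarith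
  rw [harg, scale i _ hmem, main k hk1]
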